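/- arXiv:2002.03427 — 2 statements merged into one kernel-verified Lean document; each statement's English description precedes it below -/
import Mathlib

section
/- (Existence part of Theorem 1.) Let m ≥ 1 and let M, D̄ be real m×m matrices with M(i,j) ≠ 0 for all i ≠ j. Let S be the set of real m×m matrices D that are symmetric, have zero diagonal (D(i,i) = 0 for all i), and satisfy the triangle inequalities D(i,j) ≤ D(i,k) + D(k,j) for all i,j,k. Then the masked objective f(D) = ‖M ⊙ (D − D̄)‖_F attains its minimum on S: there exists D* ∈ S with f(D*) ≤ f(D) for all D ∈ S. -/
/-- Existence part of Theorem 1: the masked Frobenius objective attains its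
minimum on the set of symmetric, zero-diagonal matrices satisfying the
triangle inequalities, provided the mask is nonzero off the diagonal. -/
theorem masked_frobenius_exists_min (m : ℕ) (hm : 1 ≤ m)
    (M Dbar : Matrix (Fin m) (Fin m) ℝ)
    (hM : ∀ i j, i ≠ j → M i j ≠ 0)
    (S : Set (Matrix (Fin m) (Fin m) ℝ))
    (hS : S = {D | (∀ i j, D i j = D j i) ∧ (∀ i, D i i = 0) ∧
      (∀ i j k, D i j ≤ D i k + D k j)})
    (f : Matrix (Fin m) (Fin m) ℝ → ℝ)
    (hf : ∀ D, f D = Real.sqrt (∑ i, ∑ j, (M i j * (D i j - Dbar i j)) ^ 2)) :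
    ∃ Dstar ∈ S, ∀ D ∈ S, f Dstar ≤ f D := by
  subst hS
  have hf' : f = fun D => Real.sqrt (∑ i, ∑ j, (M i j * (D i j - Dbar i j)) ^ 2) :=
    funext hf
  subst hf'
  set g : Matrix (Fin m) (Fin m) ℝ → ℝ :=
    fun D => ∑ i, ∑ j, (M i j * (D i j - Dbar i j)) ^ 2 with hg
  set f : Matrix (Fin m) (Fin m) ℝ → ℝ := fun D => Real.sqrt (g D) with hfdef
  have happly : ∀ (i j : Fin m), Continuous fun D : Matrix (Fin m) (Fin m) ℝ => D i j :=
    fun i j => (continuous_apply j).comp (continuous_apply i)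
  have hgc : Continuous g := by
    apply continuous_finset_sum
    intro i _
    apply continuous_finset_sum
    intro j _
    exact ((continuous_const.mul ((happly i j).sub continuous_const)).pow 2)
  have hfc : Continuous f := Real.continuous_sqrt.comp hgc
  have hgnn : ∀ D, 0 ≤ g D := fun D =>
    Finset.sum_nonneg fun i _ => Finset.sum_nonneg fun j _ => sq_nonneg _
  -- single term bound
  have hsingle : ∀ D (i j : Fin m), (M i j * (D i j - Dbar i j)) ^ 2 ≤ g D := by
    intro D i j
    calc (M i j * (D i j - Dbar i j)) ^ 2
        ≤ ∑ j', (M i j' * (D i j' - Dbar i j')) ^ 2 :=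
          Finset.single_le_sum (f := fun j' => (M i j' * (D i j' - Dbar i j')) ^ 2)
            (fun k _ => sq_nonneg _) (Finset.mem_univ j)
      _ ≤ g D := Finset.single_le_sum
          (f := fun i' => ∑ j', (M i' j' * (D i' j' - Dbar i' j')) ^ 2)
          (fun k _ => Finset.sum_nonneg fun l _ => sq_nonneg _) (Finset.mem_univ i)
  have hf0 : 0 ≤ f 0 := Real.sqrt_nonneg _
  set R : Fin m → Fin m → ℝ := fun i j => |Dbar i j| + f 0 / |M i j| with hR
  have hRnn : ∀ i j, 0 ≤ R i j := fun i j =>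
    add_nonneg (abs_nonneg _) (div_nonneg hf0 (abs_nonneg _))
  set T : Set (Matrix (Fin m) (Fin m) ℝ) :=
    {D | ∀ i j, D i j ∈ Set.Icc (-(R i j)) (R i j)} with hT
  have hTc : IsCompact T := by
    have : T = Set.univ.pi (fun i : Fin m => Set.univ.pi
        fun j : Fin m => Set.Icc (-(R i j)) (R i j)) := by
      ext D
      simp only [hT, Set.mem_setOf_eq, Set.mem_Icc]
      constructor
      · intro h i _
        intro j _
        exact h i j
      · intro h i j
        exact h i (Set.mem_univ i) j (Set.mem_univ j)
    rw [this]
    exact isCompact_univ_pi fun i => isCompact_univ_pi fun j => isCompact_Icc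
  set S : Set (Matrix (Fin m) (Fin m) ℝ) := {D | (∀ i j, D i j = D j i) ∧ (∀ i, D i i = 0) ∧
      (∀ i j k, D i j ≤ D i k + D k j)} with hSdef
  have hSclosed : IsClosed S := by
    have h1 : IsClosed {D : Matrix (Fin m) (Fin m) ℝ | ∀ i j, D i j = D j i} := by
      simp only [Set.setOf_forall]
      exact isClosed_iInter fun i => isClosed_iInter fun j =>
        isClosed_eq (happly i j) (happly j i)
    have h2 : IsClosed {D : Matrix (Fin m) (Fin m) ℝ | ∀ i, D i i = 0} := by
      simp only [Set.setOf_forall]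
      exact isClosed_iInter fun i => isClosed_eq (happly i i) continuous_const
    have h3 : IsClosed {D : Matrix (Fin m) (Fin m) ℝ | ∀ i j k, D i j ≤ D i k + D k j} := by
      simp only [Set.setOf_forall]
      exact isClosed_iInter fun i => isClosed_iInter fun j => isClosed_iInter fun k =>
        isClosed_le (happly i j) ((happly i k).add (happly k j))
    have : S = {D : Matrix (Fin m) (Fin m) ℝ | ∀ i j, D i j = D j i} ∩
        ({D | ∀ i, D i i = 0} ∩ {D | ∀ i j k, D i j ≤ D i k + D k j}) := by
      ext D; simp [hSdef, and_assoc]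
    rw [this]
    exact h1.inter (h2.inter h3)
  have h0S : (0 : Matrix (Fin m) (Fin m) ℝ) ∈ S := by
    refine ⟨fun i j => rfl, fun i => rfl, fun i j k => ?_⟩
    simp [Matrix.zero_apply]
  have h0T : (0 : Matrix (Fin m) (Fin m) ℝ) ∈ T := by
    intro i j
    simp only [Matrix.zero_apply, Set.mem_Icc]
    constructor
    · linarith [hRnn i j]
    · exact hRnn i j
  have hKc : IsCompact (S ∩ T) := hTc.inter_left hSclosed
  obtain ⟨Dstar, hDK, hmin⟩ :=
    hKc.exists_isMinOn ⟨0, h0S, h0T⟩ hfc.continuousOn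
  refine ⟨Dstar, hDK.1, ?_⟩
  intro D hD
  by_cases hDT : D ∈ T
  · exact hmin ⟨hD, hDT⟩
  · -- D outside the box: f D > f 0 ≥ f Dstar
    have hstar : f Dstar ≤ f 0 := hmin ⟨h0S, h0T⟩
    simp only [hT, Set.mem_setOf_eq, not_forall] at hDT
    obtain ⟨i, j, hij⟩ := hDT
    have hne : i ≠ j := by
      rintro rfl
      apply hij
      rw [hD.2.1 i]
      exact ⟨by linarith [hRnn i i], hRnn i i⟩
    have hMij : |M i j| > 0 := abs_pos.mpr (hM i j hne)
    have habs : |D i j| > R i j := by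
      rw [Set.mem_Icc, not_and_or] at hij
      rcases hij with h | h
      · push_neg at h
        calc R i j < -(D i j) := by linarith
          _ ≤ |D i j| := neg_le_abs _
      · push_neg at h
        exact lt_of_lt_of_le h (le_abs_self _)
    have hdiff : |D i j - Dbar i j| > f 0 / |M i j| := by
      have := abs_sub_abs_le_abs_sub (D i j) (Dbar i j)
      simp only [hR] at habs
      linarith
    have hterm : f 0 < |M i j * (D i j - Dbar i j)| := by
      rw [abs_mul]
      calc f 0 = (f 0 / |M i j|) * |M i j| := by field_simp
        _ < |D i j - Dbar i j| * |M i j| := by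
            exact mul_lt_mul_of_pos_right hdiff hMij
        _ = |M i j| * |D i j - Dbar i j| := mul_comm _ _
    have : f 0 ≤ f D := by
      calc f 0 ≤ |M i j * (D i j - Dbar i j)| := le_of_lt hterm
        _ = Real.sqrt ((M i j * (D i j - Dbar i j)) ^ 2) := (Real.sqrt_sq_eq_abs _).symm
        _ ≤ Real.sqrt (g D) := Real.sqrt_le_sqrt (hsingle D i j)
    linarith
end

section
/- (Uniqueness part of Theorem 1, Frobenius-norm case.) Let m ≥ 1 and let M, D̄ be real m×m matrices with M(i,j) ≠ 0 for all i ≠ j. Let S be the set of real m×m matrices D that are symmetric, have zero diagonal, and satisfy the triangle inequalities D(i,j) ≤ D(i,k) + D(k,j) for all i,j,k. Then the minimizer of f(D) = ‖M ⊙ (D − D̄)‖_F over S is unique: if D₁, D₂ ∈ S both minimize f over S, then D₁ = D₂. -/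
/-- Uniqueness part of Theorem 1 (Frobenius-norm case): the minimizer of the
masked Frobenius objective over the set of symmetric, zero-diagonal matrices
satisfying the triangle inequalities is unique when the mask is nonzero off
the diagonal. -/
theorem masked_frobenius_unique_min (m : ℕ) (hm : 1 ≤ m)
    (M Dbar : Matrix (Fin m) (Fin m) ℝ)
    (hM : ∀ i j, i ≠ j → M i j ≠ 0)
    (S : Set (Matrix (Fin m) (Fin m) ℝ))
    (hS : S = {D | (∀ i j, D i j = D j i) ∧ (∀ i, D i i = 0) ∧
      (∀ i j k, D i j ≤ D i k + D k j)})
    (f : Matrix (Fin m) (Fin m) ℝ → ℝ)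
    (hf : ∀ D, f D = Real.sqrt (∑ i, ∑ j, (M i j * (D i j - Dbar i j)) ^ 2))
    (D₁ D₂ : Matrix (Fin m) (Fin m) ℝ)
    (hD₁ : D₁ ∈ S) (hD₂ : D₂ ∈ S)
    (hmin₁ : ∀ D ∈ S, f D₁ ≤ f D) (hmin₂ : ∀ D ∈ S, f D₂ ≤ f D) :
    D₁ = D₂ := by
  set g : Matrix (Fin m) (Fin m) ℝ → ℝ :=
    fun D => ∑ i, ∑ j, (M i j * (D i j - Dbar i j)) ^ 2 with hg
  have hgnn : ∀ D, 0 ≤ g D := by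
    intro D
    exact Finset.sum_nonneg fun i _ => Finset.sum_nonneg fun j _ => sq_nonneg _
  have hfg : ∀ D, (f D) ^ 2 = g D := by
    intro D
    rw [hf D]
    exact Real.sq_sqrt (hgnn D)
  have hfnn : ∀ D, 0 ≤ f D := by
    intro D; rw [hf D]; exact Real.sqrt_nonneg _
  -- the two minima have the same value
  have hfeq : f D₁ = f D₂ := le_antisymm (hmin₁ D₂ hD₂) (hmin₂ D₁ hD₁)
  have hgeq : g D₁ = g D₂ := by rw [← hfg, ← hfg, hfeq]
  -- midpoint
  set Dm : Matrix (Fin m) (Fin m) ℝ := fun i j => (D₁ i j + D₂ i j) / 2 with hDm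
  rw [hS] at hD₁ hD₂
  obtain ⟨hs₁, hd₁, ht₁⟩ := hD₁
  obtain ⟨hs₂, hd₂, ht₂⟩ := hD₂
  have hDmS : Dm ∈ S := by
    rw [hS]
    refine ⟨fun i j => by simp [hDm, hs₁ i j, hs₂ i j], fun i => by simp [hDm, hd₁ i, hd₂ i],
      fun i j k => ?_⟩
    have := ht₁ i j k
    have := ht₂ i j k
    simp only [hDm]
    linarith
  have hge : g D₁ ≤ g Dm := by
    have h1 : f D₁ ≤ f Dm := hmin₁ Dm hDmS
    calc g D₁ = (f D₁) ^ 2 := (hfg D₁).symm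
      _ ≤ (f Dm) ^ 2 := by apply pow_le_pow_left₀ (hfnn D₁) h1
      _ = g Dm := hfg Dm
  -- parallelogram identity entrywise
  have hkey : g Dm = (g D₁ + g D₂) / 2 - ∑ i, ∑ j, (M i j * (D₁ i j - D₂ i j) / 2) ^ 2 := by
    simp only [hg, hDm]
    rw [← Finset.sum_add_distrib, Finset.sum_div, ← Finset.sum_sub_distrib]
    apply Finset.sum_congr rfl
    intro i _
    rw [← Finset.sum_add_distrib, Finset.sum_div, ← Finset.sum_sub_distrib]
    apply Finset.sum_congr rfl
    intro j _
    ring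
  have hsum0 : ∑ i, ∑ j, (M i j * (D₁ i j - D₂ i j) / 2) ^ 2 ≤ 0 := by
    rw [hkey, hgeq] at hge
    linarith
  have hsumnn : (0:ℝ) ≤ ∑ i, ∑ j, (M i j * (D₁ i j - D₂ i j) / 2) ^ 2 :=
    Finset.sum_nonneg fun i _ => Finset.sum_nonneg fun j _ => sq_nonneg _
  have hall : ∀ i j, (M i j * (D₁ i j - D₂ i j) / 2) ^ 2 = 0 := by
    have h := le_antisymm hsum0 hsumnn
    intro i j
    have hi := (Finset.sum_eq_zero_iff_of_nonneg
      (fun i _ => Finset.sum_nonneg fun j _ => sq_nonneg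
        (M i j * (D₁ i j - D₂ i j) / 2))).mp h i (Finset.mem_univ i)
    exact (Finset.sum_eq_zero_iff_of_nonneg
      (fun j _ => sq_nonneg _)).mp hi j (Finset.mem_univ j)
  ext i j
  by_cases hij : i = j
  · subst hij; rw [hd₁ i, hd₂ i]
  · have h0 := hall i j
    have : M i j * (D₁ i j - D₂ i j) / 2 = 0 := by
      exact pow_eq_zero_iff (by norm_num) |>.mp h0
    have hsub : D₁ i j - D₂ i j = 0 := by
      rcases mul_eq_zero.mp (by linarith : M i j * (D₁ i j - D₂ i j) = 0) with h | h
      · exact absurd h (hM i j hij)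
      · exact h
    linarith
end
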